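/- Let (P,·,[−,−]) be a finite-dimensional Poisson algebra and (B = ⊕_{i∈ℤ} B_i, ∘_B) a ℤ-graded perm algebra, i.e. each B_i is finite-dimensional and B_i ∘_B B_j ⊆ B_{i+j} for all i,j ∈ ℤ. Then P⊗B, equipped with the bilinear operations determined by (p⊗b)∘(q⊗c) = (p·q)⊗(b∘_B c) and (p⊗b)∗(q⊗c) = [p,q]⊗(b∘_B c), is a ℤ-graded dual pre-Poisson algebra with grading (P⊗B)_i = P⊗B_i: it is a DPP algebra and (P⊗B_i)∘(P⊗B_j) ⊆ P⊗B_{i+j} and (P⊗B_i)∗(P⊗B_j) ⊆ P⊗B_{i+j} for all i,j ∈ ℤ. -/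

import Mathlib

open TensorProduct LinearMap

/-- The axioms of a dual pre-Poisson (DPP) algebra. -/
structure IsDPP {k A : Type*} [Field k] [AddCommGroup A] [Module k A]
    (c s : A →ₗ[k] A →ₗ[k] A) : Prop where
  perm_assoc : ∀ a b d : A, c a (c b d) = c (c a b) d
  perm_comm : ∀ a b d : A, c (c a b) d = c (c b a) d
  leibniz : ∀ a b d : A, s a (s b d) = s (s a b) d + s b (s a d)
  comp1 : ∀ a b d : A, s (c a b) d = c a (s b d) + c b (s a d)
  comp2 : ∀ a b d : A, c (s a b) d = s a (c b d) - c b (s a d)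
  comp3 : ∀ a b d : A, c (s a b) d = - c (s b a) d

/-- The axioms of a (not necessarily unital) Poisson algebra. -/
structure IsPoisson {k P : Type*} [Field k] [AddCommGroup P] [Module k P]
    (m br : P →ₗ[k] P →ₗ[k] P) : Prop where
  mul_comm : ∀ p q : P, m p q = m q p
  mul_assoc : ∀ p q u : P, m p (m q u) = m (m p q) u
  br_antisymm : ∀ p q : P, br p q = - br q p
  jacobi : ∀ p q u : P, br p (br q u) + br q (br u p) + br u (br p q) = 0
  leibniz : ∀ p q u : P, br p (m q u) = m (br p q) u + m q (br p u)

/-- The tensor product of a finite-dimensional Poisson algebra and a ℤ-graded perm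
algebra is a ℤ-graded dual pre-Poisson algebra with grading `(P⊗B)_i = P ⊗ B_i`:
it is a DPP algebra and `(P⊗B_i)∘(P⊗B_j) ⊆ P⊗B_{i+j}`,
`(P⊗B_i)∗(P⊗B_j) ⊆ P⊗B_{i+j}` for all `i j : ℤ`. -/
theorem stmt3 {k P B : Type*} [Field k] [CharZero k]
    [AddCommGroup P] [Module k P] [FiniteDimensional k P]
    [AddCommGroup B] [Module k B]
    (m br : P →ₗ[k] P →ₗ[k] P) (hP : IsPoisson m br)
    (cB : B →ₗ[k] B →ₗ[k] B)
    (hB : ∀ b c d : B, cB b (cB c d) = cB (cB b c) d ∧ cB (cB b c) d = cB (cB c b) d)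
    (Bsub : ℤ → Submodule k B)
    (hinternal : DirectSum.IsInternal Bsub)
    (hfd : ∀ i : ℤ, FiniteDimensional k (Bsub i))
    (hgraded : ∀ (i j : ℤ) (b c : B), b ∈ Bsub i → c ∈ Bsub j → cB b c ∈ Bsub (i + j))
    (circ star : P ⊗[k] B →ₗ[k] P ⊗[k] B →ₗ[k] P ⊗[k] B)
    (hcirc : ∀ (p q : P) (b c : B),
      circ (p ⊗ₜ[k] b) (q ⊗ₜ[k] c) = (m p q) ⊗ₜ[k] (cB b c))
    (hstar : ∀ (p q : P) (b c : B),
      star (p ⊗ₜ[k] b) (q ⊗ₜ[k] c) = (br p q) ⊗ₜ[k] (cB b c)) :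
    IsDPP circ star ∧
    (∀ (i j : ℤ) (x y : P ⊗[k] B),
      x ∈ LinearMap.range (TensorProduct.map (LinearMap.id (M := P)) (Bsub i).subtype) →
      y ∈ LinearMap.range (TensorProduct.map (LinearMap.id (M := P)) (Bsub j).subtype) →
      circ x y ∈
        LinearMap.range (TensorProduct.map (LinearMap.id (M := P)) (Bsub (i + j)).subtype) ∧
      star x y ∈
        LinearMap.range (TensorProduct.map (LinearMap.id (M := P)) (Bsub (i + j)).subtype)) := by
  -- derived Poisson identities
  have hbr1 : ∀ p q u : P, br (m p q) u = m p (br q u) + m q (br p u) := by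
    intro p q u
    rw [hP.br_antisymm (m p q) u, hP.leibniz u p q, hP.br_antisymm u p, hP.br_antisymm u q]
    simp only [map_neg, LinearMap.neg_apply, LinearMap.map_neg]
    rw [hP.mul_comm (br p u) q]
    abel
  have hbr2 : ∀ p q u : P, br p (br q u) = br (br p q) u + br q (br p u) := by
    intro p q u
    have hj := hP.jacobi p q u
    rw [hP.br_antisymm u p, hP.br_antisymm u (br p q)] at hj
    simp only [map_neg, LinearMap.map_neg] at hj
    rw [← sub_eq_zero, ← hj]
    abel
  have hcBperm : ∀ b c d : B, cB c (cB b d) = cB (cB b c) d := by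
    intro b c d
    rw [(hB c b d).1, ← (hB b c d).2]
  have hperm_assoc : ∀ x y z : P ⊗[k] B, circ x (circ y z) = circ (circ x y) z := by
    intro x y z
    induction x using TensorProduct.induction_on with
    | zero => simp
    | add x1 x2 h1 h2 => simp only [map_add, LinearMap.add_apply]; rw [h1, h2]
    | tmul p b =>
      induction y using TensorProduct.induction_on with
      | zero => simp
      | add y1 y2 h1 h2 => simp only [map_add, LinearMap.add_apply]; rw [h1, h2]
      | tmul q c =>
        induction z using TensorProduct.induction_on with
        | zero => simp
        | add z1 z2 h1 h2 => simp only [map_add]; rw [h1, h2]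
        | tmul u d =>
          rw [hcirc q u c d, hcirc p (m q u) b (cB c d), hcirc p q b c,
            hcirc (m p q) u (cB b c) d, hP.mul_assoc, (hB b c d).1]
  have hperm_comm : ∀ x y z : P ⊗[k] B, circ (circ x y) z = circ (circ y x) z := by
    intro x y z
    induction x using TensorProduct.induction_on with
    | zero => simp
    | add x1 x2 h1 h2 => simp only [map_add, LinearMap.add_apply]; rw [h1, h2]
    | tmul p b =>
      induction y using TensorProduct.induction_on with
      | zero => simp
      | add y1 y2 h1 h2 => simp only [map_add, LinearMap.add_apply]; rw [h1, h2]
      | tmul q c =>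
        induction z using TensorProduct.induction_on with
        | zero => simp
        | add z1 z2 h1 h2 => simp only [map_add]; rw [h1, h2]
        | tmul u d =>
          rw [hcirc p q b c, hcirc (m p q) u (cB b c) d, hcirc q p c b,
            hcirc (m q p) u (cB c b) d, hP.mul_comm p q, (hB b c d).2]
  have hleib : ∀ x y z : P ⊗[k] B, star x (star y z) = star (star x y) z + star y (star x z) := by
    intro x y z
    induction x using TensorProduct.induction_on with
    | zero => simp
    | add x1 x2 h1 h2 => simp only [map_add, LinearMap.add_apply]; rw [h1, h2]; abel
    | tmul p b =>
      induction y using TensorProduct.induction_on with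
      | zero => simp
      | add y1 y2 h1 h2 => simp only [map_add, LinearMap.add_apply]; rw [h1, h2]; abel
      | tmul q c =>
        induction z using TensorProduct.induction_on with
        | zero => simp
        | add z1 z2 h1 h2 => simp only [map_add]; rw [h1, h2]; abel
        | tmul u d =>
          rw [hstar q u c d, hstar p (br q u) b (cB c d), hstar p q b c,
            hstar (br p q) u (cB b c) d, hstar p u b d, hstar q (br p u) c (cB b d),
            hbr2, add_tmul, (hB b c d).1, hcBperm b c d]
  have hcomp1 : ∀ x y z : P ⊗[k] B, star (circ x y) z = circ x (star y z) + circ y (star x z) := by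
    intro x y z
    induction x using TensorProduct.induction_on with
    | zero => simp
    | add x1 x2 h1 h2 => simp only [map_add, LinearMap.add_apply]; rw [h1, h2]; abel
    | tmul p b =>
      induction y using TensorProduct.induction_on with
      | zero => simp
      | add y1 y2 h1 h2 => simp only [map_add, LinearMap.add_apply]; rw [h1, h2]; abel
      | tmul q c =>
        induction z using TensorProduct.induction_on with
        | zero => simp
        | add z1 z2 h1 h2 => simp only [map_add]; rw [h1, h2]; abel
        | tmul u d =>
          rw [hcirc p q b c, hstar (m p q) u (cB b c) d, hstar q u c d,
            hcirc p (br q u) b (cB c d), hstar p u b d, hcirc q (br p u) c (cB b d),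
            hbr1, add_tmul, (hB b c d).1, hcBperm b c d]
  have hcomp2 : ∀ x y z : P ⊗[k] B, circ (star x y) z = star x (circ y z) - circ y (star x z) := by
    intro x y z
    induction x using TensorProduct.induction_on with
    | zero => simp
    | add x1 x2 h1 h2 => simp only [map_add, LinearMap.add_apply]; rw [h1, h2]; abel
    | tmul p b =>
      induction y using TensorProduct.induction_on with
      | zero => simp
      | add y1 y2 h1 h2 => simp only [map_add, LinearMap.add_apply]; rw [h1, h2]; abel
      | tmul q c =>
        induction z using TensorProduct.induction_on with
        | zero => simp
        | add z1 z2 h1 h2 => simp only [map_add]; rw [h1, h2]; abel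
        | tmul u d =>
          rw [hstar p q b c, hcirc (br p q) u (cB b c) d, hcirc q u c d,
            hstar p (m q u) b (cB c d), hstar p u b d, hcirc q (br p u) c (cB b d),
            hP.leibniz p q u, (hB b c d).1, hcBperm b c d, add_tmul]
          abel
  have hcomp3 : ∀ x y z : P ⊗[k] B, circ (star x y) z = - circ (star y x) z := by
    intro x y z
    induction x using TensorProduct.induction_on with
    | zero => simp
    | add x1 x2 h1 h2 => simp only [map_add, LinearMap.add_apply]; rw [h1, h2]; abel
    | tmul p b =>
      induction y using TensorProduct.induction_on with
      | zero => simp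
      | add y1 y2 h1 h2 => simp only [map_add, LinearMap.add_apply]; rw [h1, h2]; abel
      | tmul q c =>
        induction z using TensorProduct.induction_on with
        | zero => simp
        | add z1 z2 h1 h2 => simp only [map_add]; rw [h1, h2]; abel
        | tmul u d =>
          rw [hstar p q b c, hcirc (br p q) u (cB b c) d, hstar q p c b,
            hcirc (br q p) u (cB c b) d, hP.br_antisymm p q, (hB b c d).2]
          simp [neg_tmul]
  have grade : ∀ (F : P ⊗[k] B →ₗ[k] P ⊗[k] B →ₗ[k] P ⊗[k] B) (op : P →ₗ[k] P →ₗ[k] P),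
      (∀ (p q : P) (b c : B), F (p ⊗ₜ[k] b) (q ⊗ₜ[k] c) = (op p q) ⊗ₜ[k] (cB b c)) →
      ∀ (i j : ℤ) (x' : P ⊗[k] (Bsub i)) (y' : P ⊗[k] (Bsub j)),
      F (TensorProduct.map LinearMap.id (Bsub i).subtype x')
        (TensorProduct.map LinearMap.id (Bsub j).subtype y') ∈
        LinearMap.range (TensorProduct.map (LinearMap.id (M := P)) (Bsub (i + j)).subtype) := by
    intro F op hF i j x' y'
    induction x' using TensorProduct.induction_on with
    | zero => simp
    | add x1 x2 h1 h2 =>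
      simp only [map_add, LinearMap.add_apply]
      exact Submodule.add_mem _ h1 h2
    | tmul p b =>
      induction y' using TensorProduct.induction_on with
      | zero => simp
      | add y1 y2 h1 h2 =>
        simp only [map_add]
        exact Submodule.add_mem _ h1 h2
      | tmul q c =>
        simp only [TensorProduct.map_tmul, LinearMap.id_coe, id_eq, Submodule.coe_subtype]
        rw [hF]
        exact ⟨(op p q) ⊗ₜ[k] ⟨cB (b : B) (c : B), hgraded i j b c b.2 c.2⟩, rfl⟩
  refine ⟨⟨hperm_assoc, hperm_comm, hleib, hcomp1, hcomp2, hcomp3⟩, ?_⟩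
  intro i j x y hx hy
  obtain ⟨x', rfl⟩ := hx
  obtain ⟨y', rfl⟩ := hy
  exact ⟨grade circ m hcirc i j x' y', grade star br hstar i j x' y'⟩
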